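/- For any N ≥ 1, intensities λ_i > 0, and θ ≥ 0, the infrastructure sharing coverage Σ_i λ_i/(Σ_j λ_j + λ_i √θ arctan√θ) is at least the baseline coverage 1/(1 + √θ arctan√θ), with equality iff N = 1 (or θ = 0). -/
import Mathlib

open Real

/-- For any `N ≥ 1`, intensities `λᵢ > 0` and `θ ≥ 0`, the infrastructure sharing
coverage `Σᵢ λᵢ/(Σⱼ λⱼ + λᵢ √θ arctan√θ)` is at least the baseline coverage
`1/(1+√θ arctan√θ)`, with equality iff `N = 1` or `θ = 0`. -/
theorem infrastructure_sharing_gain (N : ℕ) (hN : 1 ≤ N) (lam : Fin N → ℝ)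
    (hlam : ∀ i, 0 < lam i) (θ : ℝ) (hθ : 0 ≤ θ) :
    (1 / (1 + Real.sqrt θ * Real.arctan (Real.sqrt θ)) ≤
        ∑ i, lam i / ((∑ j, lam j) + lam i * (Real.sqrt θ * Real.arctan (Real.sqrt θ)))) ∧
      ((∑ i, lam i / ((∑ j, lam j) + lam i * (Real.sqrt θ * Real.arctan (Real.sqrt θ)))) =
          1 / (1 + Real.sqrt θ * Real.arctan (Real.sqrt θ)) ↔ N = 1 ∨ θ = 0) := by
  set t := Real.sqrt θ * Real.arctan (Real.sqrt θ) with htdef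
  have ht : 0 ≤ t := by
    apply mul_nonneg (Real.sqrt_nonneg _)
    rw [← Real.arctan_zero]
    exact Real.arctan_strictMono.monotone (Real.sqrt_nonneg _)
  have hθt : θ = 0 ↔ t = 0 := by
    constructor
    · intro h; simp [htdef, h]
    · intro h
      by_contra hθ0
      have hθpos : 0 < θ := lt_of_le_of_ne hθ (Ne.symm hθ0)
      have hs : 0 < Real.sqrt θ := Real.sqrt_pos.mpr hθpos
      have ha : 0 < Real.arctan (Real.sqrt θ) := by
        rw [← Real.arctan_zero]
        exact Real.arctan_strictMono hs
      rw [htdef] at h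
      nlinarith
  clear_value t
  set S := ∑ j, lam j with hSdef
  have hne : (Finset.univ : Finset (Fin N)).Nonempty := by
    simp [Finset.univ_nonempty_iff]
    exact Fin.pos_iff_nonempty.mp hN
  have hS : 0 < S := Finset.sum_pos (fun i _ => hlam i) hne
  have hlS : ∀ i, lam i ≤ S := fun i =>
    Finset.single_le_sum (fun j _ => (hlam j).le) (Finset.mem_univ i)
  have hden : ∀ i : Fin N, 0 < S + lam i * t := fun i =>
    add_pos_of_pos_of_nonneg hS (mul_nonneg (hlam i).le ht)
  have h1t : (0:ℝ) < 1 + t := by linarith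
  have hkey : ∀ i : Fin N, lam i / (S + lam i * t) - lam i / (S * (1 + t)) =
      lam i * t * (S - lam i) / ((S + lam i * t) * (S * (1 + t))) := by
    intro i
    rw [div_sub_div _ _ (hden i).ne' (mul_pos hS h1t).ne']
    congr 1
    ring
  have hnn : ∀ i : Fin N, 0 ≤ lam i / (S + lam i * t) - lam i / (S * (1 + t)) := by
    intro i
    rw [hkey i]
    exact div_nonneg
      (mul_nonneg (mul_nonneg (hlam i).le ht) (sub_nonneg.mpr (hlS i)))
      (mul_pos (hden i) (mul_pos hS h1t)).le
  have hsum1 : ∑ i, lam i / (S * (1 + t)) = 1 / (1 + t) := by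
    rw [← Finset.sum_div, ← hSdef]
    rw [div_eq_div_iff (mul_pos hS h1t).ne' h1t.ne']
    ring
  have hdecomp : ∑ i, lam i / (S + lam i * t) =
      1 / (1 + t) + ∑ i, (lam i / (S + lam i * t) - lam i / (S * (1 + t))) := by
    rw [Finset.sum_sub_distrib, hsum1]
    ring
  constructor
  · rw [hdecomp]
    have : 0 ≤ ∑ i, (lam i / (S + lam i * t) - lam i / (S * (1 + t))) :=
      Finset.sum_nonneg (fun i _ => hnn i)
    linarith
  · constructor
    · intro heq
      rw [hdecomp] at heq
      have hzero : ∑ i, (lam i / (S + lam i * t) - lam i / (S * (1 + t))) = 0 := by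
        linarith
      have hall := (Finset.sum_eq_zero_iff_of_nonneg (fun i _ => hnn i)).mp hzero
      by_contra hcon
      push_neg at hcon
      obtain ⟨hN1, hθ0⟩ := hcon
      have htpos : 0 < t := lt_of_le_of_ne ht (fun h => hθ0 (hθt.mpr h.symm))
      have hN2 : 2 ≤ N := by omega
      obtain ⟨i0, i1, hne01⟩ : ∃ i0 i1 : Fin N, i0 ≠ i1 :=
        ⟨⟨0, by omega⟩, ⟨1, by omega⟩, by simp [Fin.ext_iff]⟩
      have hgt : lam i0 < S := by
        calc lam i0 < lam i0 + lam i1 := by linarith [hlam i1]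
          _ = ∑ j ∈ ({i0, i1} : Finset (Fin N)), lam j := by
              rw [Finset.sum_pair hne01]
          _ ≤ ∑ j, lam j := Finset.sum_le_sum_of_subset_of_nonneg
              (Finset.subset_univ _) (fun j _ _ => (hlam j).le)
          _ = S := hSdef.symm
      have h0 := hall i0 (Finset.mem_univ i0)
      rw [hkey i0] at h0
      have hnum : lam i0 * t * (S - lam i0) = 0 :=
        (div_eq_zero_iff.mp h0).resolve_right
          (mul_pos (hden i0) (mul_pos hS h1t)).ne'
      have : 0 < lam i0 * t * (S - lam i0) :=
        mul_pos (mul_pos (hlam i0) htpos) (by linarith)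
      linarith
    · intro h
      rw [hdecomp]
      have hz : ∑ i, (lam i / (S + lam i * t) - lam i / (S * (1 + t))) = 0 := by
        apply Finset.sum_eq_zero
        intro i _
        rcases h with h1 | h0
        · have hSi : S = lam i := by
            subst h1
            rw [hSdef, Fin.sum_univ_one]
            congr 1
            exact Subsingleton.elim _ _
          rw [hkey i, hSi]
          simp
        · have ht0 : t = 0 := hθt.mp h0
          rw [hkey i, ht0]
          simp
      rw [hz]
      ring
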